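/- Suppose γ₁, γ₂ > 0 with γ₁·γ₂ < 1, and h₁, h₂ > 0. Then p₁ = (γ₁·h₂² + γ₁·γ₂·h₁²)/(h₁²·h₂²·(1 − γ₁γ₂)) and p₂ = (γ₂·h₁² + γ₁·γ₂·h₂²)/(h₁²·h₂²·(1 − γ₁γ₂)) are the unique nonnegative solutions of the system γ₁ = p₁·h₁²/(p₂·h₁² + 1) and γ₂ = p₂·h₂²/(p₁·h₂² + 1). -/

import Mathlib

theorem power_alloc_mutual (γ₁ γ₂ h₁ h₂ : ℝ) (hγ₁ : 0 < γ₁) (hγ₂ : 0 < γ₂)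
    (hprod : γ₁ * γ₂ < 1) (hh₁ : 0 < h₁) (hh₂ : 0 < h₂) (p₁ p₂ : ℝ)
    (hp₁ : 0 ≤ p₁) (hp₂ : 0 ≤ p₂) :
    (γ₁ = p₁ * h₁ ^ 2 / (p₂ * h₁ ^ 2 + 1) ∧ γ₂ = p₂ * h₂ ^ 2 / (p₁ * h₂ ^ 2 + 1))
      ↔ (p₁ = (γ₁ * h₂ ^ 2 + γ₁ * γ₂ * h₁ ^ 2) / (h₁ ^ 2 * h₂ ^ 2 * (1 - γ₁ * γ₂)) ∧
         p₂ = (γ₂ * h₁ ^ 2 + γ₁ * γ₂ * h₂ ^ 2) / (h₁ ^ 2 * h₂ ^ 2 * (1 - γ₁ * γ₂))) := by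
  have h1 : (0:ℝ) < h₁ ^ 2 := by positivity
  have h2 : (0:ℝ) < h₂ ^ 2 := by positivity
  have d1 : (0:ℝ) < p₂ * h₁ ^ 2 + 1 := by positivity
  have d2 : (0:ℝ) < p₁ * h₂ ^ 2 + 1 := by positivity
  have hd : (0:ℝ) < 1 - γ₁ * γ₂ := by linarith
  constructor
  · rintro ⟨e1, e2⟩
    have e1' : γ₁ * (p₂ * h₁ ^ 2 + 1) = p₁ * h₁ ^ 2 := by
      field_simp at e1; linarith
    have e2' : γ₂ * (p₁ * h₂ ^ 2 + 1) = p₂ * h₂ ^ 2 := by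
      field_simp at e2; linarith
    constructor
    · rw [eq_div_iff (by positivity)]
      linear_combination -h₂ ^ 2 * e1' - γ₁ * h₁ ^ 2 * e2'
    · rw [eq_div_iff (by positivity)]
      linear_combination -h₁ ^ 2 * e2' - γ₂ * h₂ ^ 2 * e1'
  · rintro ⟨e1, e2⟩
    subst e1 e2
    constructor
    · rw [eq_div_iff (by positivity)]
      field_simp
      ring
    · rw [eq_div_iff (by positivity)]
      field_simp [hd.ne']
      linear_combination (-h₁ ^ 2) * inv_mul_cancel₀ hd.ne'
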